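/- Let n, k ≥ 1 be integers and let P = conv(V) where V ⊆ ℤⁿ ∩ [0,k]ⁿ is finite and nonempty. Let c, c̆ ∈ ℤⁿ be such that sign(cᵀz) = sign(c̆ᵀz) for every z ∈ ℤⁿ with ‖z‖₁ ≤ nk. If x* ∈ V satisfies c̆ᵀx* ≥ c̆ᵀx for all x ∈ P, then x* also satisfies cᵀx* ≥ cᵀx for all x ∈ P. -/

import Mathlib

theorem preprocessing_preserves_optimality
    (n k : ℕ) (hn : 1 ≤ n) (hk : 1 ≤ k)
    (V : Set (Fin n → ℤ)) (hVfin : V.Finite) (hVne : V.Nonempty)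
    (hVbox : ∀ v ∈ V, ∀ j, 0 ≤ v j ∧ v j ≤ (k : ℤ))
    (c cb : Fin n → ℤ)
    (hsign : ∀ z : Fin n → ℤ, (∑ j, |z j|) ≤ (n : ℤ) * k →
      Int.sign (∑ j, c j * z j) = Int.sign (∑ j, cb j * z j))
    (P : Set (Fin n → ℝ))
    (hP : P = convexHull ℝ ((fun v : Fin n → ℤ => fun j => (v j : ℝ)) '' V))
    (xs : Fin n → ℤ) (hxs : xs ∈ V)
    (hopt : ∀ x ∈ P, ∑ j, (cb j : ℝ) * x j ≤ ∑ j, (cb j : ℝ) * (xs j : ℝ)) :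
    ∀ x ∈ P, ∑ j, (c j : ℝ) * x j ≤ ∑ j, (c j : ℝ) * (xs j : ℝ) := by
  -- Step 1: the inequality holds for every vertex v ∈ V
  have hvert : ∀ v ∈ V, (∑ j, c j * v j) ≤ ∑ j, c j * xs j := by
    intro v hv
    -- set z = xs - v
    set z : Fin n → ℤ := fun j => xs j - v j with hz
    have hzbound : (∑ j, |z j|) ≤ (n : ℤ) * k := by
      have : ∀ j, |z j| ≤ (k : ℤ) := by
        intro j
        have h1 := hVbox v hv j
        have h2 := hVbox xs hxs j
        rw [abs_le]; constructor <;> simp [hz] <;> omega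
      calc (∑ j, |z j|) ≤ ∑ _j : Fin n, (k : ℤ) := Finset.sum_le_sum fun j _ => this j
        _ = (n : ℤ) * k := by simp [mul_comm]
    -- v's real image is in P
    have hvP : (fun j => ((v j : ℝ))) ∈ P := by
      rw [hP]
      exact subset_convexHull ℝ _ ⟨v, hv, rfl⟩
    have hreal := hopt _ hvP
    have hcb : 0 ≤ ∑ j, cb j * z j := by
      have : ((∑ j, cb j * z j : ℤ) : ℝ) = ∑ j, (cb j : ℝ) * (xs j : ℝ) - ∑ j, (cb j : ℝ) * (v j : ℝ) := by
        push_cast [hz, mul_sub, Finset.sum_sub_distrib]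
        ring
      have h0 : (0 : ℝ) ≤ ((∑ j, cb j * z j : ℤ) : ℝ) := by rw [this]; linarith
      exact_mod_cast h0
    have hc : 0 ≤ ∑ j, c j * z j := by
      rw [← Int.sign_nonneg_iff, hsign z hzbound, Int.sign_nonneg_iff]
      exact hcb
    have : (∑ j, c j * z j) = ∑ j, c j * xs j - ∑ j, c j * v j := by
      simp [hz, mul_sub, Finset.sum_sub_distrib]
    omega
  -- Step 2: extend to the convex hull via convexity of the half-space
  set C : ℝ := ∑ j, (c j : ℝ) * (xs j : ℝ) with hC
  have hlin : IsLinearMap ℝ (fun x : Fin n → ℝ => ∑ j, (c j : ℝ) * x j) := by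
    constructor
    · intro x y; simp [mul_add, Finset.sum_add_distrib]
    · intro a x; simp only [Finset.mul_sum, Pi.smul_apply, smul_eq_mul]; exact Finset.sum_congr rfl fun j _ => by ring
  have hconv : Convex ℝ {x : Fin n → ℝ | ∑ j, (c j : ℝ) * x j ≤ C} :=
    convex_halfSpace_le hlin C
  have hsub : ((fun v : Fin n → ℤ => fun j => (v j : ℝ)) '' V) ⊆
      {x : Fin n → ℝ | ∑ j, (c j : ℝ) * x j ≤ C} := by
    rintro _ ⟨v, hv, rfl⟩
    have := hvert v hv
    have : ((∑ j, c j * v j : ℤ) : ℝ) ≤ ((∑ j, c j * xs j : ℤ) : ℝ) := by exact_mod_cast this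
    simpa [hC] using this
  intro x hx
  have : x ∈ {x : Fin n → ℝ | ∑ j, (c j : ℝ) * x j ≤ C} := by
    rw [hP] at hx
    exact convexHull_min hsub hconv hx
  exact this
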